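/- Let (b_n)_{n≥0} and (λ_n)_{n≥0} be sequences of positive integers with b_n → ∞, λ_n → ∞, and log b_{n+1} / (∑_{k=0}^{n} λ_k log b_k) → ∞. Then the quasi-periodic continued fraction ξ = [0; b₀^{λ₀}, b₁^{λ₁}, b₂^{λ₂}, …] (where each bₖ appears λₖ consecutive times as a partial quotient) is a Liouville number, i.e. w₁(ξ) = +∞. -/

import Mathlib

open Filter Finset Polynomial

/-- Numerators of the convergents of the continued fraction `[a 0; a 1, a 2, …]`. -/
def convP (a : ℕ → ℤ) : ℕ → ℤ
  | 0 => a 0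
  | 1 => a 1 * a 0 + 1
  | (n+2) => a (n+2) * convP a (n+1) + convP a n

/-- Denominators of the convergents of the continued fraction `[a 0; a 1, a 2, …]`. -/
def convQ (a : ℕ → ℤ) : ℕ → ℤ
  | 0 => 1
  | 1 => a 1
  | (n+2) => a (n+2) * convQ a (n+1) + convQ a n

/-- `ξ` is the value of the continued fraction with partial quotients `a`,
i.e. the limit of its convergents. -/
def IsCFValue (a : ℕ → ℤ) (ξ : ℝ) : Prop :=
  Filter.Tendsto (fun n => (convP a n : ℝ) / (convQ a n : ℝ)) Filter.atTop (nhds ξ)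

lemma two_step {P : ℕ → Prop} (h0 : P 0) (h1 : P 1)
    (ih : ∀ n, P n → P (n+1) → P (n+2)) : ∀ n, P n := by
  have key : ∀ n, P n ∧ P (n+1) := by
    intro n
    induction n with
    | zero => exact ⟨h0, h1⟩
    | succ k hk => exact ⟨hk.2, ih k hk.1 hk.2⟩
  exact fun n => (key n).1

section aux
variable (a : ℕ → ℤ) (ha : ∀ i, 1 ≤ a (i+1))
include ha

lemma convQ_one_le : ∀ n, 1 ≤ convQ a n := by
  refine two_step ?_ ?_ ?_
  · simp [convQ]
  · simpa [convQ] using ha 0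
  · intro n h1 h2
    show 1 ≤ a (n+2) * convQ a (n+1) + convQ a n
    nlinarith [ha (n+1)]

lemma convQ_le_succ : ∀ n, convQ a n ≤ convQ a (n+1) := by
  intro n
  match n with
  | 0 => simpa [convQ] using ha 0
  | (m+1) =>
    show convQ a (m+1) ≤ a (m+2) * convQ a (m+1) + convQ a m
    nlinarith [ha (m+1), convQ_one_le a ha m, convQ_one_le a ha (m+1)]

lemma nat_le_convQ : ∀ n : ℕ, (n : ℤ) ≤ convQ a n := by
  refine two_step ?_ ?_ ?_
  · simp [convQ]
  · simpa [convQ] using ha 0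
  · intro n h1 h2
    show ((n+2:ℕ):ℤ) ≤ a (n+2) * convQ a (n+1) + convQ a n
    push_cast
    push_cast at h2
    have key : convQ a (n+1) ≤ a (n+2) * convQ a (n+1) :=
      le_mul_of_one_le_left (by linarith [convQ_one_le a ha (n+1)]) (ha (n+1))
    linarith [convQ_one_le a ha n]

omit ha in
lemma conv_det : ∀ n, convP a (n+1) * convQ a n - convP a n * convQ a (n+1) = (-1)^n := by
  intro n
  induction n with
  | zero => simp [convP, convQ]; ring
  | succ k hk =>
    show (a (k+2) * convP a (k+1) + convP a k) * convQ a (k+1)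
        - convP a (k+1) * (a (k+2) * convQ a (k+1) + convQ a k) = (-1)^(k+1)
    have : (a (k+2) * convP a (k+1) + convP a k) * convQ a (k+1)
        - convP a (k+1) * (a (k+2) * convQ a (k+1) + convQ a k)
        = -(convP a (k+1) * convQ a k - convP a k * convQ a (k+1)) := by ring
    rw [this, hk]; ring

lemma convQ_le_prod : ∀ n, convQ a n ≤ ∏ i ∈ range n, (2 * a (i+1)) := by
  have hmono : ∀ n, (∏ i ∈ range n, (2 * a (i+1))) ≤ ∏ i ∈ range (n+1), (2 * a (i+1)) := by
    intro n
    rw [Finset.prod_range_succ]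
    have hp : (1:ℤ) ≤ ∏ i ∈ range n, (2 * a (i+1)) := by
      calc (1:ℤ) = ∏ _i ∈ range n, 1 := by simp
      _ ≤ ∏ i ∈ range n, (2 * a (i+1)) :=
          Finset.prod_le_prod (by simp) (fun i _ => by linarith [ha i])
    nlinarith [ha n]
  refine two_step ?_ ?_ ?_
  · simp [convQ]
  · simp [convQ, Finset.prod_range_succ]; linarith [ha 0]
  · intro n h1 h2
    show a (n+2) * convQ a (n+1) + convQ a n ≤ _
    rw [Finset.prod_range_succ]
    have h3 : convQ a n ≤ ∏ i ∈ range (n+1), (2 * a (i+1)) := le_trans h1 (hmono n)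
    have hp : (1:ℤ) ≤ ∏ i ∈ range (n+1), (2 * a (i+1)) := by
      calc (1:ℤ) = ∏ _i ∈ range (n+1), 1 := by simp
      _ ≤ ∏ i ∈ range (n+1), (2 * a (i+1)) :=
          Finset.prod_le_prod (by simp) (fun i _ => by linarith [ha i])
    have hq1 : 1 ≤ convQ a (n+1) := convQ_one_le a ha (n+1)
    nlinarith [ha (n+1)]

end aux

section auxR
variable (a : ℕ → ℤ) (ha : ∀ i, 1 ≤ a (i+1))
include ha

lemma convQR_pos : ∀ n, (0:ℝ) < (convQ a n : ℝ) := by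
  intro n
  exact_mod_cast lt_of_lt_of_le one_pos (convQ_one_le a ha n) |>.trans_le le_rfl

lemma conv_sub (n : ℕ) :
    (convP a (n+1) : ℝ) / (convQ a (n+1) : ℝ) - (convP a n : ℝ) / (convQ a n : ℝ)
      = (-1)^n / ((convQ a n : ℝ) * (convQ a (n+1) : ℝ)) := by
  have h0 := convQR_pos a ha n
  have h1 := convQR_pos a ha (n+1)
  have hd : ((convP a (n+1) * convQ a n - convP a n * convQ a (n+1) : ℤ) : ℝ)
      = ((-1)^n : ℤ) := by exact_mod_cast congrArg (fun z : ℤ => (z : ℝ)) (conv_det a n)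
  push_cast at hd
  field_simp
  linear_combination hd

lemma convQ_lt_two (n : ℕ) : convQ a n < convQ a (n+2) := by
  show convQ a n < a (n+2) * convQ a (n+1) + convQ a n
  nlinarith [ha (n+1), convQ_one_le a ha (n+1)]

lemma conv_even_mono :
    StrictMono (fun k => (convP a (2*k) : ℝ) / (convQ a (2*k) : ℝ)) := by
  apply strictMono_nat_of_lt_succ
  intro k
  have e1 := conv_sub a ha (2*k)
  have e2 := conv_sub a ha (2*k+1)
  have h0 := convQR_pos a ha (2*k)
  have h1 := convQR_pos a ha (2*k+1)
  have h2 := convQR_pos a ha (2*k+2)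
  have hlt : (convQ a (2*k) : ℝ) < (convQ a (2*k+2) : ℝ) := by
    exact_mod_cast convQ_lt_two a ha (2*k)
  have hpow1 : ((-1:ℝ))^(2*k) = 1 := by
    rw [pow_mul]; norm_num
  have hpow2 : ((-1:ℝ))^(2*k+1) = -1 := by
    rw [pow_succ, hpow1]; norm_num
  have key : (1:ℝ) / ((convQ a (2*k+1) : ℝ) * (convQ a (2*k+2) : ℝ))
      < 1 / ((convQ a (2*k) : ℝ) * (convQ a (2*k+1) : ℝ)) := by
    apply one_div_lt_one_div_of_lt (by positivity)
    calc (convQ a (2*k) : ℝ) * (convQ a (2*k+1) : ℝ)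
        = (convQ a (2*k+1) : ℝ) * (convQ a (2*k) : ℝ) := by ring
      _ < (convQ a (2*k+1) : ℝ) * (convQ a (2*k+2) : ℝ) := by
          exact mul_lt_mul_of_pos_left hlt h1
  show (convP a (2*k) : ℝ) / (convQ a (2*k) : ℝ)
      < (convP a (2*(k+1)) : ℝ) / (convQ a (2*(k+1)) : ℝ)
  have h2k : 2*(k+1) = 2*k+1+1 := by ring
  rw [h2k]
  rw [hpow1] at e1
  rw [hpow2] at e2
  ring_nf at e1 e2 key ⊢
  linarith

lemma conv_odd_anti :
    StrictAnti (fun k => (convP a (2*k+1) : ℝ) / (convQ a (2*k+1) : ℝ)) := by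
  apply strictAnti_nat_of_succ_lt
  intro k
  have e1 := conv_sub a ha (2*k+1)
  have e2 := conv_sub a ha (2*k+2)
  have h0 := convQR_pos a ha (2*k+1)
  have h1 := convQR_pos a ha (2*k+2)
  have h2 := convQR_pos a ha (2*k+3)
  have hlt : (convQ a (2*k+1) : ℝ) < (convQ a (2*k+3) : ℝ) := by
    exact_mod_cast convQ_lt_two a ha (2*k+1)
  have hpow1 : ((-1:ℝ))^(2*k+1) = -1 := by
    rw [pow_succ, pow_mul]; norm_num
  have hpow2 : ((-1:ℝ))^(2*k+2) = 1 := by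
    rw [pow_succ, hpow1]; norm_num
  have key : (1:ℝ) / ((convQ a (2*k+2) : ℝ) * (convQ a (2*k+3) : ℝ))
      < 1 / ((convQ a (2*k+1) : ℝ) * (convQ a (2*k+2) : ℝ)) := by
    apply one_div_lt_one_div_of_lt (by positivity)
    calc (convQ a (2*k+1) : ℝ) * (convQ a (2*k+2) : ℝ)
        = (convQ a (2*k+2) : ℝ) * (convQ a (2*k+1) : ℝ) := by ring
      _ < (convQ a (2*k+2) : ℝ) * (convQ a (2*k+3) : ℝ) := by
          exact mul_lt_mul_of_pos_left hlt h1
  show (convP a (2*(k+1)+1) : ℝ) / (convQ a (2*(k+1)+1) : ℝ)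
      < (convP a (2*k+1) : ℝ) / (convQ a (2*k+1) : ℝ)
  have h2k : 2*(k+1)+1 = 2*k+2+1 := by ring
  rw [h2k]
  rw [hpow1] at e1
  rw [hpow2] at e2
  ring_nf at e1 e2 key ⊢
  linarith

end auxR

section auxS
variable (a : ℕ → ℤ) (ha : ∀ i, 1 ≤ a (i+1)) (ξ : ℝ)
  (hlim : Filter.Tendsto (fun n => (convP a n : ℝ) / (convQ a n : ℝ))
    Filter.atTop (nhds ξ))
include ha hlim

lemma xi_between : ∀ k, (convP a (2*k) : ℝ) / (convQ a (2*k) : ℝ) < ξ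
    ∧ ξ < (convP a (2*k+1) : ℝ) / (convQ a (2*k+1) : ℝ) := by
  have hE : Filter.Tendsto (fun k => (convP a (2*k) : ℝ) / (convQ a (2*k) : ℝ))
      Filter.atTop (nhds ξ) := by
    apply hlim.comp
    apply Filter.tendsto_atTop_atTop.mpr
    exact fun m => ⟨m, fun k hk => by omega⟩
  have hO : Filter.Tendsto (fun k => (convP a (2*k+1) : ℝ) / (convQ a (2*k+1) : ℝ))
      Filter.atTop (nhds ξ) := by
    apply hlim.comp
    apply Filter.tendsto_atTop_atTop.mpr
    exact fun m => ⟨m, fun k hk => by omega⟩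
  intro k
  constructor
  · calc (convP a (2*k) : ℝ) / (convQ a (2*k) : ℝ)
        < (convP a (2*(k+1)) : ℝ) / (convQ a (2*(k+1)) : ℝ) :=
          conv_even_mono a ha (Nat.lt_succ_self k)
      _ ≤ ξ := (conv_even_mono a ha).monotone.ge_of_tendsto hE (k+1)
  · calc ξ ≤ (convP a (2*(k+1)+1) : ℝ) / (convQ a (2*(k+1)+1) : ℝ) :=
          (conv_odd_anti a ha).antitone.le_of_tendsto hO (k+1)
      _ < (convP a (2*k+1) : ℝ) / (convQ a (2*k+1) : ℝ) :=
          conv_odd_anti a ha (Nat.lt_succ_self k)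

lemma xi_bound (n : ℕ) : ξ ≠ (convP a n : ℝ) / (convQ a n : ℝ)
    ∧ |ξ - (convP a n : ℝ) / (convQ a n : ℝ)|
      < 1 / ((convQ a n : ℝ) * (convQ a (n+1) : ℝ)) := by
  have hsub := conv_sub a ha n
  rcases Nat.even_or_odd n with ⟨k, hk⟩ | ⟨k, hk⟩
  · have hk' : n = 2*k := by omega
    subst hk'
    have h1 := (xi_between a ha ξ hlim k).1
    have h2 := (xi_between a ha ξ hlim k).2
    have hpow : ((-1:ℝ))^(2*k) = 1 := by rw [pow_mul]; norm_num
    rw [hpow] at hsub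
    constructor
    · exact ne_of_gt h1
    · rw [abs_of_pos (by linarith)]
      linarith
  · have hk' : n = 2*k+1 := by omega
    subst hk'
    have h1 := (xi_between a ha ξ hlim k).2
    have h2 := (xi_between a ha ξ hlim (k+1)).1
    have hpow : ((-1:ℝ))^(2*k+1) = -1 := by rw [pow_succ, pow_mul]; norm_num
    rw [hpow, neg_div] at hsub
    have h2' : (convP a (2*k+1+1) : ℝ) / (convQ a (2*k+1+1) : ℝ) < ξ := by
      have : 2*(k+1) = 2*k+1+1 := by ring
      rw [this] at h2
      exact h2
    constructor
    · exact ne_of_lt h1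
    · rw [abs_of_neg (by linarith)]
      linarith

end auxS

/-- Let `(b n)`, `(lam n)` be positive integer sequences with `b n → ∞`, `lam n → ∞`, and
`log (b (n+1)) / (∑_{k=0}^n lam k * log (b k)) → ∞`. Then the quasi-periodic continued
fraction `ξ = [0; b 0 ^ (lam 0), b 1 ^ (lam 1), …]` (each `b k` repeated `lam k` times)
is a Liouville number. -/
theorem quasiPeriodic_liouville
    (b lam : ℕ → ℕ) (hb : ∀ n, 0 < b n) (hlam : ∀ n, 0 < lam n)
    (hbtop : Filter.Tendsto b Filter.atTop Filter.atTop)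
    (hlamtop : Filter.Tendsto lam Filter.atTop Filter.atTop)
    (hgrow : Filter.Tendsto (fun n => Real.log (b (n + 1)) /
        ∑ k ∈ Finset.range (n + 1), (lam k : ℝ) * Real.log (b k))
      Filter.atTop Filter.atTop)
    (a : ℕ → ℤ) (ha0 : a 0 = 0)
    (hblock : ∀ j i : ℕ, (∑ k ∈ Finset.range j, lam k) < i →
      i ≤ ∑ k ∈ Finset.range (j + 1), lam k → a i = (b j : ℤ))
    (ξ : ℝ) (hξ : IsCFValue a ξ)
    : Liouville ξ := by
  have hxi : Filter.Tendsto (fun n => (convP a n : ℝ) / (convQ a n : ℝ)) Filter.atTop (nhds ξ) := hξ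
  classical
  -- partial sums of lam
  set S : ℕ → ℕ := fun j => ∑ k ∈ Finset.range j, lam k with hSdef
  have hS : ∀ m : ℕ, m ≤ S m := by
    intro m
    calc m = ∑ _k ∈ range m, 1 := by simp
    _ ≤ S m := Finset.sum_le_sum fun k _ => hlam k
  have hSsucc : ∀ j, S (j+1) = S j + lam j := by
    intro j; simp [hSdef, Finset.sum_range_succ]
  -- every a (i+1) is ≥ 1
  have ha : ∀ i, 1 ≤ a (i+1) := by
    intro i
    have hex : ∃ m, i + 1 ≤ S (m+1) := ⟨i, hS (i+1)⟩
    set j := Nat.find hex with hjdef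
    have hj2 : i + 1 ≤ S (j+1) := Nat.find_spec hex
    have hj1 : S j < i + 1 := by
      rcases Nat.eq_zero_or_pos j with h0 | h0
      · rw [h0]; simp [hSdef]
      · have := Nat.find_min hex (show j - 1 < j by omega)
        have hj' : j - 1 + 1 = j := by omega
        rw [hj'] at this
        omega
    rw [hblock j (i+1) hj1 hj2]
    exact_mod_cast hb j
  -- block product formula
  have hprod : ∀ j, (∏ i ∈ range (S j), a (i+1)) = ∏ k ∈ range j, ((b k : ℤ))^(lam k) := by
    intro j
    induction j with
    | zero => simp [hSdef]
    | succ m ih =>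
      rw [hSsucc m, Finset.prod_range_add, ih, Finset.prod_range_succ]
      congr 1
      have : ∀ i ∈ range (lam m), a (S m + i + 1) = (b m : ℤ) := by
        intro i hi
        simp only [Finset.mem_range] at hi
        have h1 : ∑ k ∈ range m, lam k < S m + i + 1 := by simp only [hSdef]; omega
        have h2 : S m + i + 1 ≤ ∑ k ∈ range (m+1), lam k := by
          rw [Finset.sum_range_succ]; simp only [hSdef]; omega
        exact hblock m (S m + i + 1) h1 h2
      calc (∏ i ∈ range (lam m), a (S m + i + 1)) = ∏ _i ∈ range (lam m), (b m : ℤ) :=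
            Finset.prod_congr rfl this
      _ = ((b m : ℤ))^(lam m) := by rw [Finset.prod_const, Finset.card_range]
  -- log bound for convQ at block ends
  set S' : ℕ → ℝ := fun j => ∑ k ∈ Finset.range (j+1), (lam k : ℝ) * Real.log (b k) with hS'def
  have hblog : ∀ k, (0:ℝ) ≤ Real.log (b k) := fun k =>
    Real.log_nonneg (by exact_mod_cast hb k)
  have hS'nonneg : ∀ j, 0 ≤ S' j := by
    intro j
    apply Finset.sum_nonneg
    intro k _
    exact mul_nonneg (by positivity) (hblog k)
  have hqlog : ∀ j, Real.log (convQ a (S (j+1)))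
      ≤ (S (j+1) : ℝ) * Real.log 2 + S' j := by
    intro j
    have h1 : convQ a (S (j+1)) ≤ ∏ i ∈ range (S (j+1)), (2 * a (i+1)) :=
      convQ_le_prod a ha (S (j+1))
    have h2 : (∏ i ∈ range (S (j+1)), (2 * a (i+1)))
        = 2^(S (j+1)) * ∏ k ∈ range (j+1), ((b k : ℤ))^(lam k) := by
      rw [Finset.prod_mul_distrib, Finset.prod_const, Finset.card_range, hprod (j+1)]
    have h3 : (convQ a (S (j+1)) : ℝ)
        ≤ 2^(S (j+1)) * ∏ k ∈ range (j+1), ((b k : ℝ))^(lam k) := by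
      have := h1.trans_eq h2
      exact_mod_cast this
    have hq0 : (0:ℝ) < (convQ a (S (j+1)) : ℝ) := convQR_pos a ha _
    have h4 := Real.log_le_log hq0 h3
    rw [Real.log_mul (by positivity) (by
      apply ne_of_gt
      apply Finset.prod_pos
      intro k _
      have : (0:ℝ) < (b k : ℝ) := by exact_mod_cast hb k
      positivity)] at h4
    rw [Real.log_pow] at h4
    rw [Real.log_prod (by
      intro k _
      have : (0:ℝ) < (b k : ℝ) := by exact_mod_cast hb k
      positivity)] at h4
    calc Real.log (convQ a (S (j+1))) ≤ (S (j+1) : ℝ) * Real.log 2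
          + ∑ k ∈ range (j+1), Real.log ((b k : ℝ)^(lam k)) := h4
    _ = (S (j+1) : ℝ) * Real.log 2 + S' j := by
        congr 1
        apply Finset.sum_congr rfl
        intro k _
        rw [Real.log_pow]
  -- eventually b k ≥ 2
  obtain ⟨K, hK⟩ := Filter.eventually_atTop.mp (hbtop.eventually_ge_atTop 2)
  set C : ℝ := ∑ k ∈ Finset.range K, (lam k : ℝ) * Real.log 2 with hCdef
  have hlog2pos : (0:ℝ) < Real.log 2 := Real.log_pos (by norm_num)
  have hC0 : 0 ≤ C := Finset.sum_nonneg fun k _ => mul_nonneg (by positivity) hlog2pos.le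
  have hNlog : ∀ j, K ≤ j + 1 → (S (j+1) : ℝ) * Real.log 2 ≤ C + S' j := by
    intro j hKj
    obtain ⟨m, hm⟩ : ∃ m, j + 1 = K + m := ⟨j+1-K, by omega⟩
    have hsum : (S (j+1) : ℝ) * Real.log 2
        = ∑ k ∈ range (j+1), (lam k : ℝ) * Real.log 2 := by
      simp only [hSdef]
      push_cast
      rw [Finset.sum_mul]
    have hsplit1 : ∑ k ∈ range (j+1), (lam k : ℝ) * Real.log 2
        = C + ∑ i ∈ range m, (lam (K+i) : ℝ) * Real.log 2 := by
      rw [hm, Finset.sum_range_add]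
    have hsplit2 : S' j = (∑ k ∈ range K, (lam k : ℝ) * Real.log (b k))
        + ∑ i ∈ range m, (lam (K+i) : ℝ) * Real.log (b (K+i)) := by
      simp only [hS'def]
      rw [hm, Finset.sum_range_add]
    have hterm : ∑ i ∈ range m, (lam (K+i) : ℝ) * Real.log 2
        ≤ ∑ i ∈ range m, (lam (K+i) : ℝ) * Real.log (b (K+i)) := by
      apply Finset.sum_le_sum
      intro i _
      apply mul_le_mul_of_nonneg_left _ (by positivity)
      apply Real.log_le_log (by norm_num)
      exact_mod_cast hK (K+i) (by omega)
    have hfirst : (0:ℝ) ≤ ∑ k ∈ range K, (lam k : ℝ) * Real.log (b k) :=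
      Finset.sum_nonneg fun k _ => mul_nonneg (by positivity) (hblog k)
    rw [hsum, hsplit1, hsplit2]
    linarith
  -- S' tends to infinity
  have hS'lb : ∀ j, K ≤ j + 1 → ((j+1-K : ℕ) : ℝ) * Real.log 2 ≤ S' j := by
    intro j hKj
    obtain ⟨m, hm⟩ : ∃ m, j + 1 = K + m := ⟨j+1-K, by omega⟩
    have hmK : j + 1 - K = m := by omega
    have hsplit2 : S' j = (∑ k ∈ range K, (lam k : ℝ) * Real.log (b k))
        + ∑ i ∈ range m, (lam (K+i) : ℝ) * Real.log (b (K+i)) := by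
      simp only [hS'def]
      rw [hm, Finset.sum_range_add]
    have hfirst : (0:ℝ) ≤ ∑ k ∈ range K, (lam k : ℝ) * Real.log (b k) :=
      Finset.sum_nonneg fun k _ => mul_nonneg (by positivity) (hblog k)
    have hterm : ((m:ℕ):ℝ) * Real.log 2 ≤ ∑ i ∈ range m, (lam (K+i) : ℝ) * Real.log (b (K+i)) := by
      calc ((m:ℕ):ℝ) * Real.log 2 = ∑ _i ∈ range m, Real.log 2 := by
            rw [Finset.sum_const, Finset.card_range, nsmul_eq_mul]
      _ ≤ _ := by
          apply Finset.sum_le_sum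
          intro i _
          have hl1 : (1:ℝ) ≤ (lam (K+i) : ℝ) := by exact_mod_cast hlam (K+i)
          have hlog : Real.log 2 ≤ Real.log (b (K+i)) := by
            apply Real.log_le_log (by norm_num)
            exact_mod_cast hK (K+i) (by omega)
          nlinarith [hblog (K+i)]
    rw [hmK, hsplit2]
    linarith
  have hS'tend : Filter.Tendsto S' Filter.atTop Filter.atTop := by
    apply Filter.tendsto_atTop_mono' Filter.atTop
      (show ∀ᶠ j in Filter.atTop, ((j+1-K : ℕ) : ℝ) * Real.log 2 ≤ S' j from
        Filter.eventually_atTop.mpr ⟨K, fun j hj => hS'lb j (by omega)⟩)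
    apply Filter.Tendsto.atTop_mul_const hlog2pos
    apply Filter.Tendsto.comp tendsto_natCast_atTop_atTop
    apply Filter.tendsto_atTop.mpr
    intro T
    exact Filter.eventually_atTop.mpr ⟨T + K, fun j hj => by omega⟩
  -- main argument
  intro n
  have hev1 : ∀ᶠ j in Filter.atTop, max C 1 ≤ S' j := hS'tend.eventually_ge_atTop _
  have hev2 : ∀ᶠ j in Filter.atTop, (3*(n+1) : ℝ) ≤ Real.log (b (j+1)) / S' j := by
    have := hgrow.eventually_ge_atTop (3*(n+1) : ℝ)
    exact this
  have hev3 : ∀ᶠ j in Filter.atTop, max K 1 ≤ j := Filter.eventually_ge_atTop _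
  obtain ⟨j, hj1, hj2, hj3⟩ := (hev1.and (hev2.and hev3)).exists
  have hS'1 : (1:ℝ) ≤ S' j := le_trans (le_max_right C 1) hj1
  have hS'C : C ≤ S' j := le_trans (le_max_left C 1) hj1
  have hS'pos : (0:ℝ) < S' j := lt_of_lt_of_le one_pos hS'1
  have hjK : K ≤ j + 1 := by have := le_trans (le_max_left K 1) hj3; omega
  have hj1' : 1 ≤ j := le_trans (le_max_right K 1) hj3
  have hlogb : 3*((n:ℝ)+1) * S' j ≤ Real.log (b (j+1)) := by
    have h := mul_le_mul_of_nonneg_right hj2 hS'pos.le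
    rwa [div_mul_cancel₀ _ (ne_of_gt hS'pos)] at h
  set N := S (j+1) with hNdef
  have hqNlog : Real.log (convQ a N) ≤ C + 2 * S' j := by
    have h1 := hqlog j
    have h2 := hNlog j hjK
    linarith
  have key : (n:ℝ) * Real.log (convQ a N) < Real.log (b (j+1)) := by
    have h1 : (n:ℝ) * Real.log (convQ a N) ≤ (n:ℝ) * (C + 2*S' j) := by
      apply mul_le_mul_of_nonneg_left hqNlog (by positivity)
    have h2 : (n:ℝ) * (C + 2*S' j) ≤ (n:ℝ) * (3*S' j) := by
      apply mul_le_mul_of_nonneg_left (by linarith) (by positivity)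
    have h3 : (n:ℝ) * (3*S' j) < 3*((n:ℝ)+1) * S' j := by nlinarith
    linarith
  -- integer inequality
  have hq1le : (1:ℤ) ≤ convQ a N := convQ_one_le a ha N
  have hqNpos : (0:ℝ) < (convQ a N : ℝ) := convQR_pos a ha N
  have hbpos : (0:ℝ) < ((b (j+1) : ℤ) : ℝ) := by exact_mod_cast hb (j+1)
  have hqn : (convQ a N)^n < ((b (j+1) : ℕ) : ℤ) := by
    have hR : ((convQ a N : ℝ))^n < ((b (j+1) : ℤ) : ℝ) := by
      rw [← Real.log_lt_log_iff (by positivity) hbpos]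
      rw [Real.log_pow]
      push_cast
      push_cast at key
      convert key using 2
    have : (((convQ a N)^n : ℤ) : ℝ) < ((b (j+1) : ℤ) : ℝ) := by push_cast; push_cast at hR; linarith
    exact_mod_cast this
  -- N ≥ 2 and q N ≥ 2
  have hN2 : 2 ≤ N := le_trans (by omega) (hS (j+1))
  have hqN2 : 1 < convQ a N := by
    have := nat_le_convQ a ha N
    have h2 : (2:ℤ) ≤ (N:ℤ) := by exact_mod_cast hN2
    omega
  -- a (N+1) = b (j+1)
  have haN : a (N+1) = ((b (j+1) : ℕ) : ℤ) := by
    apply hblock (j+1) (N+1)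
    · simp only [hNdef, hSdef]; omega
    · have := hSsucc (j+1)
      have hl := hlam (j+1)
      simp only [hNdef, hSdef] at *
      omega
  -- q (N+1) ≥ b (j+1) * q N
  have hqsucc : ((b (j+1) : ℕ) : ℤ) * convQ a N ≤ convQ a (N+1) := by
    obtain ⟨m, hm⟩ : ∃ m, N = m + 1 := ⟨N-1, by omega⟩
    rw [hm] at haN ⊢
    show (((b (j+1) : ℕ)) : ℤ) * convQ a (m+1) ≤ a (m+2) * convQ a (m+1) + convQ a m
    have haN' : a (m+2) = ((b (j+1) : ℕ) : ℤ) := haN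
    rw [haN']
    have hq0 := convQ_one_le a ha m
    linarith
  have hbZ : (1:ℤ) ≤ ((b (j+1) : ℕ) : ℤ) := by exact_mod_cast hb (j+1)
  have hpow : (convQ a N)^n ≤ convQ a N * convQ a (N+1) := by
    have hqq : (1:ℤ) ≤ convQ a N * convQ a N := by nlinarith [hq1le]
    have h1 : ((b (j+1) : ℕ) : ℤ) ≤ ((b (j+1) : ℕ) : ℤ) * (convQ a N * convQ a N) :=
      le_mul_of_one_le_right (by linarith) hqq
    have h2 : ((b (j+1) : ℕ) : ℤ) * (convQ a N * convQ a N) ≤ convQ a N * convQ a (N+1) := by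
      have h3 := mul_le_mul_of_nonneg_left hqsucc (show (0:ℤ) ≤ convQ a N by linarith)
      nlinarith [h3]
    linarith [hqn]
  -- conclude
  obtain ⟨hne, habs⟩ := xi_bound a ha ξ hxi N
  refine ⟨convP a N, convQ a N, hqN2, hne, ?_⟩
  apply lt_of_lt_of_le habs
  apply one_div_le_one_div_of_le (by positivity)
  have : (((convQ a N)^n : ℤ) : ℝ) ≤ ((convQ a N * convQ a (N+1) : ℤ) : ℝ) := by exact_mod_cast hpow
  push_cast at this
  linarith
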